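/- For every forecasting system F, the set of infinite binary sequences for which F is high-low calibrated is a meagre subset of Cantor space (with the product topology). -/

import Mathlib

open Filter Topology

/-- The forecast probability on day `k` for data sequence `a`:
`F` applied to the first `k` bits of `a`. -/
noncomputable def fc (F : List Bool → ℝ) (a : ℕ → Bool) (k : ℕ) : ℝ :=
  F (List.ofFn (fun i : Fin k => a i))

/-- The discrepancy on day `k`: `a_k - π_k`. -/
noncomputable def disc (F : List Bool → ℝ) (a : ℕ → Bool) (k : ℕ) : ℝ :=
  (if a k then 1 else 0) - fc F a k

open Classical in
/-- Mean discrepancy over the days `k < n` satisfying `P`. -/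
noncomputable def avgDisc (F : List Bool → ℝ) (a : ℕ → Bool) (P : ℕ → Prop) (n : ℕ) : ℝ :=
  (∑ k ∈ (Finset.range n).filter P, disc F a k) /
    (((Finset.range n).filter P).card : ℝ)

/-- `F` is high-low calibrated for `a`: for each of the two groups of days
(forecast `≥ 1/2`, forecast `< 1/2`), either the group is finite or the mean
discrepancy over that group among the first `n` days tends to `0`. -/
def HighLowCalibrated (F : List Bool → ℝ) (a : ℕ → Bool) : Prop :=
  ({k | 1/2 ≤ fc F a k}.Finite ∨
      Tendsto (avgDisc F a (fun k => 1/2 ≤ fc F a k)) atTop (𝓝 0)) ∧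
  ({k | fc F a k < 1/2}.Finite ∨
      Tendsto (avgDisc F a (fun k => fc F a k < 1/2)) atTop (𝓝 0))

open Classical in
/-- The adversarial sequence against `F`: `a_k = 1` iff the forecast is `< 1/2`. -/
noncomputable def adv (F : List Bool → ℝ) : ℕ → Bool
  | k => if F (List.ofFn (fun i : Fin k => adv F i)) < 1/2 then true else false

open Classical in
noncomputable def extSeq (F : List Bool → ℝ) (w : List Bool) : ℕ → Bool
  | k => if h : k < w.length then w.get ⟨k, h⟩
    else if F (List.ofFn (fun i : Fin k => extSeq F w i)) < 1/2 then true else false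

lemma fc_congr {F : List Bool → ℝ} {a b : ℕ → Bool} {k : ℕ} (h : ∀ i < k, a i = b i) :
    fc F a k = fc F b k := by
  unfold fc
  congr 1
  congr 1
  funext i
  exact h i i.isLt

lemma disc_congr {F : List Bool → ℝ} {a b : ℕ → Bool} {k : ℕ} (h : ∀ i ≤ k, a i = b i) :
    disc F a k = disc F b k := by
  unfold disc
  rw [fc_congr (fun i hi => h i hi.le), h k le_rfl]

lemma extSeq_agree {F : List Bool → ℝ} {w : List Bool} {i : ℕ} (h : i < w.length) :
    extSeq F w i = w.get ⟨i, h⟩ := by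
  rw [extSeq, dif_pos h]

lemma fc_extSeq (F : List Bool → ℝ) (w : List Bool) (k : ℕ) :
    fc F (extSeq F w) k = F (List.ofFn (fun i : Fin k => extSeq F w i)) := rfl

lemma extSeq_high {F : List Bool → ℝ} {w : List Bool} {k : ℕ} (hk : w.length ≤ k)
    (h : 1/2 ≤ fc F (extSeq F w) k) : extSeq F w k = false := by
  rw [extSeq, dif_neg (by omega)]
  rw [show F (List.ofFn (fun i : Fin k => extSeq F w i)) = fc F (extSeq F w) k from rfl]
  rw [if_neg (not_lt.mpr h)]

lemma extSeq_low {F : List Bool → ℝ} {w : List Bool} {k : ℕ} (hk : w.length ≤ k)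
    (h : fc F (extSeq F w) k < 1/2) : extSeq F w k = true := by
  rw [extSeq, dif_neg (by omega)]
  rw [show F (List.ofFn (fun i : Fin k => extSeq F w i)) = fc F (extSeq F w) k from rfl]
  rw [if_pos h]

open Classical in
noncomputable def hSet (F : List Bool → ℝ) (a : ℕ → Bool) (n : ℕ) : Finset ℕ :=
  (Finset.range n).filter (fun k => 1/2 ≤ fc F a k)

open Classical in
noncomputable def lSet (F : List Bool → ℝ) (a : ℕ → Bool) (n : ℕ) : Finset ℕ :=
  (Finset.range n).filter (fun k => fc F a k < 1/2)

lemma avgDisc_high_eq (F : List Bool → ℝ) (a : ℕ → Bool) (n : ℕ) :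
    avgDisc F a (fun k => 1/2 ≤ fc F a k) n
      = (∑ k ∈ hSet F a n, disc F a k) / ((hSet F a n).card : ℝ) := rfl

lemma avgDisc_low_eq (F : List Bool → ℝ) (a : ℕ → Bool) (n : ℕ) :
    avgDisc F a (fun k => fc F a k < 1/2) n
      = (∑ k ∈ lSet F a n, disc F a k) / ((lSet F a n).card : ℝ) := rfl

/-- The "tame at stage `n` with bound `N`" condition. -/
def condC (F : List Bool → ℝ) (N n : ℕ) (a : ℕ → Bool) : Prop :=
  ((hSet F a n).card ≤ N ∨ |avgDisc F a (fun k => 1/2 ≤ fc F a k) n| ≤ 1/4) ∧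
  ((lSet F a n).card ≤ N ∨ |avgDisc F a (fun k => fc F a k < 1/2) n| ≤ 1/4)

lemma hSet_congr {F : List Bool → ℝ} {a b : ℕ → Bool} {n : ℕ} (h : ∀ i < n, a i = b i) :
    hSet F a n = hSet F b n := by
  unfold hSet
  refine Finset.filter_congr fun k hk => ?_
  rw [fc_congr (fun i hi => h i (hi.trans (Finset.mem_range.mp hk)))]

lemma lSet_congr {F : List Bool → ℝ} {a b : ℕ → Bool} {n : ℕ} (h : ∀ i < n, a i = b i) :
    lSet F a n = lSet F b n := by
  unfold lSet
  refine Finset.filter_congr fun k hk => ?_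
  rw [fc_congr (fun i hi => h i (hi.trans (Finset.mem_range.mp hk)))]

lemma condC_congr {F : List Bool → ℝ} {N n : ℕ} {a b : ℕ → Bool} (h : ∀ i < n, a i = b i) :
    condC F N n a ↔ condC F N n b := by
  have hsum : ∀ s : Finset ℕ, s ⊆ Finset.range n →
      ∑ k ∈ s, disc F a k = ∑ k ∈ s, disc F b k := by
    intro s hs
    refine Finset.sum_congr rfl fun k hk => ?_
    exact disc_congr fun i hi => h i (lt_of_le_of_lt hi (Finset.mem_range.mp (hs hk)))
  have hh := hSet_congr (F := F) h
  have hl := lSet_congr (F := F) h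
  have hsh : ∑ k ∈ hSet F b n, disc F a k = ∑ k ∈ hSet F b n, disc F b k :=
    hsum _ (Finset.filter_subset _ _)
  have hsl : ∑ k ∈ lSet F b n, disc F a k = ∑ k ∈ lSet F b n, disc F b k :=
    hsum _ (Finset.filter_subset _ _)
  unfold condC
  rw [avgDisc_high_eq, avgDisc_high_eq, avgDisc_low_eq, avgDisc_low_eq, hh, hl, hsh, hsl]

lemma abs_disc_le {F : List Bool → ℝ} (hF : ∀ w, F w ∈ Set.Icc (0 : ℝ) 1)
    (a : ℕ → Bool) (k : ℕ) : |disc F a k| ≤ 1 := by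
  have h := hF (List.ofFn (fun i : Fin k => a i))
  have h0 := h.1
  have h1 := h.2
  unfold disc fc
  rcases a k with _ | _ <;> simp <;> rw [abs_le] <;> constructor <;> linarith

lemma avg_bound {A : Finset ℕ} {f : ℕ → ℝ} {m : ℕ}
    (hb : ∀ k ∈ A, f k ≤ 1) (h2 : ∀ k ∈ A, m ≤ k → f k ≤ -(1/2))
    (hA : 6*m + 1 ≤ A.card) : (∑ k ∈ A, f k) / (A.card : ℝ) < -(1/4) := by
  classical
  set A₁ := A.filter (fun k => k < m) with hA₁
  set A₂ := A.filter (fun k => ¬ k < m) with hA₂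
  have hsplit : ∑ k ∈ A, f k = ∑ k ∈ A₁, f k + ∑ k ∈ A₂, f k :=
    (Finset.sum_filter_add_sum_filter_not A _ f).symm
  have hc1 : A₁.card ≤ m := by
    refine Finset.card_le_card (fun k hk => ?_) |>.trans (le_of_eq (Finset.card_range m))
    exact Finset.mem_range.mpr (Finset.mem_filter.mp hk).2
  have hS1 : ∑ k ∈ A₁, f k ≤ (A₁.card : ℝ) := by
    have := Finset.sum_le_card_nsmul A₁ f 1 (fun k hk => hb k (Finset.mem_filter.mp hk).1)
    simpa using this
  have hS2 : ∑ k ∈ A₂, f k ≤ (A₂.card : ℝ) * (-(1/2)) := by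
    have := Finset.sum_le_card_nsmul A₂ f (-(1/2))
      (fun k hk => h2 k (Finset.mem_filter.mp hk).1 (not_lt.mp (Finset.mem_filter.mp hk).2))
    simpa [nsmul_eq_mul] using this
  have hcard : A₁.card + A₂.card = A.card :=
    Finset.card_filter_add_card_filter_not _
  have hc0 : (0 : ℝ) < (A.card : ℝ) := by
    have : 0 < A.card := by omega
    exact_mod_cast this
  rw [div_lt_iff₀ hc0]
  have hc1' : (A₁.card : ℝ) ≤ (m : ℝ) := by exact_mod_cast hc1
  have hcard' : (A₁.card : ℝ) + (A₂.card : ℝ) = (A.card : ℝ) := by exact_mod_cast hcard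
  have hA' : 6*(m : ℝ) + 1 ≤ (A.card : ℝ) := by exact_mod_cast hA
  linarith

lemma exists_bad (F : List Bool → ℝ) (hF : ∀ w, F w ∈ Set.Icc (0 : ℝ) 1)
    (w : List Bool) (N : ℕ) :
    ∃ n, N ≤ n ∧ ¬ condC F N n (extSeq F w) := by
  classical
  set m := w.length with hm
  set b := extSeq F w with hb
  set n := 12 * m + 2 * N + 2 with hn
  refine ⟨n, by omega, ?_⟩
  have hpart : (hSet F b n).card + (lSet F b n).card = n := by
    have : lSet F b n = (Finset.range n).filter (fun k => ¬ (1/2 ≤ fc F b k)) := by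
      unfold lSet
      exact Finset.filter_congr fun k _ => by rw [not_le]
    rw [this]
    unfold hSet
    rw [Finset.card_filter_add_card_filter_not, Finset.card_range]
  -- discrepancy bounds
  have hub : ∀ k, disc F b k ≤ 1 := fun k => (abs_le.mp (abs_disc_le hF b k)).2
  have hlb : ∀ k, -(1:ℝ) ≤ disc F b k := fun k => (abs_le.mp (abs_disc_le hF b k)).1
  rcases le_total ((lSet F b n).card) ((hSet F b n).card) with hle | hle
  · -- high side is big
    have hH : 6 * m + N + 1 ≤ (hSet F b n).card := by omega
    intro hcond
    rcases hcond.1 with h | h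
    · omega
    · have hAvg : (∑ k ∈ hSet F b n, disc F b k) / ((hSet F b n).card : ℝ) < -(1/4) := by
        refine avg_bound (m := m) (fun k hk => hub k) (fun k hk hmk => ?_) (by omega)
        have hhi : 1/2 ≤ fc F b k := (Finset.mem_filter.mp hk).2
        have hfalse := extSeq_high (F := F) (w := w) (k := k) hmk hhi
        unfold disc
        rw [hb] at hhi ⊢
        rw [hfalse]
        simp only [if_neg Bool.false_ne_true]
        linarith
      rw [avgDisc_high_eq] at h
      have := (abs_le.mp h).1
      linarith
  · -- low side is big
    have hL : 6 * m + N + 1 ≤ (lSet F b n).card := by omega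
    intro hcond
    rcases hcond.2 with h | h
    · omega
    · have hAvg : (∑ k ∈ lSet F b n, -(disc F b k)) / ((lSet F b n).card : ℝ) < -(1/4) := by
        refine avg_bound (m := m) (fun k hk => by linarith [hlb k]) (fun k hk hmk => ?_) (by omega)
        have hlo : fc F b k < 1/2 := (Finset.mem_filter.mp hk).2
        have htrue := extSeq_low (F := F) (w := w) (k := k) hmk hlo
        unfold disc
        rw [hb] at hlo ⊢
        rw [htrue]
        norm_num
        linarith
      rw [Finset.sum_neg_distrib, neg_div] at hAvg
      rw [avgDisc_low_eq] at h
      have := (abs_le.mp h).2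
      linarith

def CN (F : List Bool → ℝ) (N : ℕ) : Set (ℕ → Bool) := {a | ∀ n, N ≤ n → condC F N n a}

lemma isClosed_CN (F : List Bool → ℝ) (N : ℕ) : IsClosed (CN F N) := by
  have hiu : CN F N = ⋂ n, {a : ℕ → Bool | N ≤ n → condC F N n a} := by
    ext a; simp [CN, Set.mem_iInter]
  rw [hiu]
  refine isClosed_iInter fun n => ?_
  have hfac : {a : ℕ → Bool | N ≤ n → condC F N n a}
      = (fun a : ℕ → Bool => fun i : Fin n => a i) ⁻¹'
        {v : Fin n → Bool | N ≤ n → condC F N n (fun i => if h : i < n then v ⟨i, h⟩ else false)} := by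
    ext a
    simp only [Set.mem_setOf_eq, Set.mem_preimage]
    have hagree : ∀ i < n, a i = (fun i : ℕ => if h : i < n then a i else false) i := by
      intro i hi
      simp [hi]
    constructor
    · intro hx hn
      exact (condC_congr hagree).mp (hx hn)
    · intro hx hn
      exact (condC_congr hagree).mpr (hx hn)
  rw [hfac]
  have hc : Continuous (fun a : ℕ → Bool => fun i : Fin n => a (i : ℕ)) :=
    continuous_pi fun i => continuous_apply _
  exact (isClosed_discrete _).preimage hc

lemma interior_CN_empty (F : List Bool → ℝ) (hF : ∀ w, F w ∈ Set.Icc (0 : ℝ) 1) (N : ℕ) :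
    interior (CN F N) = ∅ := by
  rw [Set.eq_empty_iff_forall_notMem]
  intro x hx
  have hnhds : CN F N ∈ 𝓝 x := mem_interior_iff_mem_nhds.mp hx
  rw [nhds_pi, Filter.mem_pi] at hnhds
  obtain ⟨I, hI, t, ht, hsub⟩ := hnhds
  set m := hI.toFinset.sup id + 1 with hm
  have hIm : ∀ i ∈ I, i < m := by
    intro i hi
    have : i ≤ hI.toFinset.sup id := Finset.le_sup (f := id) (hI.mem_toFinset.mpr hi)
    omega
  set w := List.ofFn (fun i : Fin m => x i) with hw
  set b := extSeq F w with hb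
  have hwl : w.length = m := by rw [hw, List.length_ofFn]
  have hagree : ∀ i < m, b i = x i := by
    intro i hi
    have hi' : i < w.length := by omega
    rw [hb, extSeq_agree hi']
    exact List.get_ofFn (fun i : Fin m => x i) ⟨i, hi'⟩
  have hbmem : b ∈ CN F N := by
    apply hsub
    intro i hi
    have := hagree i (hIm i hi)
    rw [this]
    exact mem_of_mem_nhds (ht i)
  obtain ⟨n, hn, hbad⟩ := exists_bad F hF w N
  exact hbad (by rw [← hb]; exact hbmem n hn)

lemma abs_small_eventually {f : ℕ → ℝ} (h : Tendsto f atTop (𝓝 0)) :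
    ∃ N, ∀ n, N ≤ n → |f n| ≤ 1/4 := by
  have hev : ∀ᶠ y in 𝓝 (0 : ℝ), |y| ≤ 1/4 := by
    have := Metric.closedBall_mem_nhds (0 : ℝ) (show (0:ℝ) < 1/4 by norm_num)
    filter_upwards [this] with y hy
    simpa [Real.dist_eq] using hy
  have := (h.eventually hev)
  exact eventually_atTop.mp this

lemma calib_subset (F : List Bool → ℝ) :
    {a : ℕ → Bool | HighLowCalibrated F a} ⊆ ⋃ N, CN F N := by
  intro a ha
  obtain ⟨h1, h2⟩ := ha
  have key1 : ∃ N₁, ∀ n, N₁ ≤ n →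
      ((hSet F a n).card ≤ N₁ ∨ |avgDisc F a (fun k => 1/2 ≤ fc F a k) n| ≤ 1/4) := by
    rcases h1 with hfin | ht
    · refine ⟨hfin.toFinset.card, fun n _ => Or.inl ?_⟩
      refine Finset.card_le_card fun k hk => ?_
      rw [Set.Finite.mem_toFinset]
      exact (Finset.mem_filter.mp hk).2
    · obtain ⟨N₁, hN₁⟩ := abs_small_eventually ht
      exact ⟨N₁, fun n hn => Or.inr (hN₁ n hn)⟩
  have key2 : ∃ N₂, ∀ n, N₂ ≤ n →
      ((lSet F a n).card ≤ N₂ ∨ |avgDisc F a (fun k => fc F a k < 1/2) n| ≤ 1/4) := by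
    rcases h2 with hfin | ht
    · refine ⟨hfin.toFinset.card, fun n _ => Or.inl ?_⟩
      refine Finset.card_le_card fun k hk => ?_
      rw [Set.Finite.mem_toFinset]
      exact (Finset.mem_filter.mp hk).2
    · obtain ⟨N₂, hN₂⟩ := abs_small_eventually ht
      exact ⟨N₂, fun n hn => Or.inr (hN₂ n hn)⟩
  obtain ⟨N₁, hN₁⟩ := key1
  obtain ⟨N₂, hN₂⟩ := key2
  refine Set.mem_iUnion.mpr ⟨max N₁ N₂, fun n hn => ?_⟩
  constructor
  · rcases hN₁ n (le_trans (le_max_left _ _) hn) with h | h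
    · exact Or.inl (h.trans (le_max_left _ _))
    · exact Or.inr h
  · rcases hN₂ n (le_trans (le_max_right _ _) hn) with h | h
    · exact Or.inl (h.trans (le_max_right _ _))
    · exact Or.inr h

theorem calibration_set_is_meagre
    (F : List Bool → ℝ) (hF : ∀ w, F w ∈ Set.Icc (0 : ℝ) 1) :
    IsMeagre {a : ℕ → Bool | HighLowCalibrated F a} := by
  have hmeagre : ∀ N, IsMeagre (CN F N) := by
    intro N
    refine isMeagre_iff_countable_union_isNowhereDense.mpr ⟨{CN F N}, ?_, Set.countable_singleton _, ?_⟩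
    · rintro t ht
      rw [Set.mem_singleton_iff] at ht
      subst ht
      rw [(isClosed_CN F N).isNowhereDense_iff]
      exact interior_CN_empty F hF N
    · rw [Set.sUnion_singleton]
  exact (isMeagre_iUnion hmeagre).mono (calib_subset F)
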